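/- arXiv:1807.06965 — 4 statements merged into one kernel-verified Lean document; each statement's English description precedes it below -/
import Mathlib

section
/- The star K_{1,n} (n ≥ 1) has maximum modularity equal to 0. -/
open Finset
open scoped Classical

noncomputable section

variable {V : Type*} [Fintype V]

/-- Number of edges of `G` with both endpoints in `A`. -/
def edgesIn (G : SimpleGraph V) (A : Finset V) : ℕ :=
  (G.edgeFinset.filter (fun e => ∀ v ∈ e, v ∈ A)).card

/-- Sum of degrees (in `G`) of the vertices of `A`. -/
def vol (G : SimpleGraph V) (A : Finset V) : ℕ :=
  ∑ v ∈ A, G.degree v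

/-- Number of edges of `G` with exactly one endpoint in `A`. -/
def bdry (G : SimpleGraph V) (A : Finset V) : ℕ :=
  (G.edgeFinset.filter (fun e => (∃ v ∈ e, v ∈ A) ∧ (∃ v ∈ e, v ∉ A))).card

/-- The modularity score of a vertex partition. -/
def modScore (G : SimpleGraph V) (P : Finpartition (univ : Finset V)) : ℝ :=
  (∑ A ∈ P.parts, (edgesIn G A : ℝ)) / (G.edgeFinset.card : ℝ)
    - (∑ A ∈ P.parts, (vol G A : ℝ) ^ 2) / (4 * (G.edgeFinset.card : ℝ) ^ 2)

/-- The maximum modularity of `G`. -/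
def maxMod (G : SimpleGraph V) : ℝ :=
  sSup {x : ℝ | ∃ P : Finpartition (univ : Finset V), modScore G P = x}

namespace StarAux

variable {n : ℕ}

/-- The edge embedding of the star. -/
def starEmb (n : ℕ) : Fin n ↪ Sym2 (Fin 1 ⊕ Fin n) :=
  ⟨fun j => s(Sum.inl 0, Sum.inr j), by
    intro a b h
    simpa [Sym2.eq_iff] using h⟩

lemma star_edgeFinset (n : ℕ) :
    (completeBipartiteGraph (Fin 1) (Fin n)).edgeFinset = univ.map (starEmb n) := by
  ext e
  refine Sym2.ind (fun u v => ?_) e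
  simp only [SimpleGraph.mem_edgeFinset, SimpleGraph.mem_edgeSet, mem_map,
    mem_univ, true_and, starEmb, Function.Embedding.coeFn_mk]
  constructor
  · rintro h
    rcases u with u | u <;> rcases v with v | v
    · simp at h
    · exact ⟨v, by rw [Fin.eq_zero u]; rfl⟩
    · exact ⟨u, by rw [Sym2.eq_swap, Fin.eq_zero v]; rfl⟩
    · simp at h
  · rintro ⟨j, hj⟩
    change s(Sum.inl 0, Sum.inr j) = s(u, v) at hj
    rw [Sym2.eq_iff] at hj
    rcases hj with ⟨h1, h2⟩ | ⟨h1, h2⟩ <;> subst h1 <;> subst h2 <;> simp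

lemma star_card_edges (n : ℕ) :
    (completeBipartiteGraph (Fin 1) (Fin n)).edgeFinset.card = n := by
  rw [star_edgeFinset, card_map, card_univ, Fintype.card_fin]

lemma star_degree_inl (i : Fin 1) :
    (completeBipartiteGraph (Fin 1) (Fin n)).degree (Sum.inl i) = n := by
  have h : (completeBipartiteGraph (Fin 1) (Fin n)).neighborFinset (Sum.inl i)
      = univ.map ⟨Sum.inr, Sum.inr_injective⟩ := by
    ext v
    rcases v with v | v <;> simp [SimpleGraph.mem_neighborFinset]
  rw [← SimpleGraph.card_neighborFinset_eq_degree, h, card_map, card_univ, Fintype.card_fin]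

lemma star_degree_inr (j : Fin n) :
    (completeBipartiteGraph (Fin 1) (Fin n)).degree (Sum.inr j) = 1 := by
  have h : (completeBipartiteGraph (Fin 1) (Fin n)).neighborFinset (Sum.inr j)
      = {Sum.inl 0} := by
    ext v
    rcases v with v | v <;> simp [SimpleGraph.mem_neighborFinset, Fin.eq_zero]
  rw [← SimpleGraph.card_neighborFinset_eq_degree, h, card_singleton]

lemma star_vol (A : Finset (Fin 1 ⊕ Fin n)) :
    vol (completeBipartiteGraph (Fin 1) (Fin n)) A = n * A.toLeft.card + A.toRight.card := by
  unfold vol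
  conv_lhs => rw [← Finset.toLeft_disjSum_toRight (u := A)]
  rw [Finset.sum_disjSum]
  simp [star_degree_inl, star_degree_inr, mul_comm]

lemma star_mem_edgeFinset_iff (e : Sym2 (Fin 1 ⊕ Fin n)) :
    e ∈ (completeBipartiteGraph (Fin 1) (Fin n)).edgeFinset
      ↔ ∃ j : Fin n, e = s(Sum.inl 0, Sum.inr j) := by
  rw [star_edgeFinset]
  simp only [Finset.mem_map, mem_univ, true_and, starEmb, Function.Embedding.coeFn_mk]
  constructor
  · rintro ⟨j, rfl⟩; exact ⟨j, rfl⟩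
  · rintro ⟨j, rfl⟩; exact ⟨j, rfl⟩

lemma star_edgesIn (A : Finset (Fin 1 ⊕ Fin n)) :
    edgesIn (completeBipartiteGraph (Fin 1) (Fin n)) A
      = if Sum.inl 0 ∈ A then A.toRight.card else 0 := by
  unfold edgesIn
  rw [Finset.filter_congr_decidable]
  by_cases hc : Sum.inl 0 ∈ A
  · rw [if_pos hc]
    refine (Finset.card_bij (fun j _ => s(Sum.inl 0, Sum.inr j)) ?_ ?_ ?_).symm
    · intro j hj
      refine Finset.mem_filter.mpr ⟨(star_mem_edgeFinset_iff _).2 ⟨j, rfl⟩, ?_⟩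
      intro v hv
      rw [Sym2.mem_iff] at hv
      rcases hv with rfl | rfl
      · exact hc
      · exact Finset.mem_toRight.1 hj
    · intro a _ b _ h
      simpa [Sym2.eq_iff] using h
    · intro e he
      replace he := Finset.mem_filter.mp he
      obtain ⟨j, rfl⟩ := (star_mem_edgeFinset_iff e).1 he.1
      refine ⟨j, ?_, rfl⟩
      exact Finset.mem_toRight.2 (he.2 (Sum.inr j) (by rw [Sym2.mem_iff]; right; rfl))
  · rw [if_neg hc, Finset.card_eq_zero, Finset.eq_empty_iff_forall_notMem]
    intro e he
    replace he := Finset.mem_filter.mp he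
    obtain ⟨j, rfl⟩ := (star_mem_edgeFinset_iff e).1 he.1
    exact hc (he.2 (Sum.inl 0) (by rw [Sym2.mem_iff]; left; rfl))

lemma star_toLeft_card_of_mem {A : Finset (Fin 1 ⊕ Fin n)} (h : Sum.inl 0 ∈ A) :
    A.toLeft.card = 1 := by
  have h1 : A.toLeft = {0} := by
    ext i
    simp [Fin.eq_zero i, h]
  rw [h1, card_singleton]

/-- `P.parts`, elaborated with the classical instances used in `modScore`. -/
def cparts {α : Type*} [Fintype α] (P : Finpartition (univ : Finset α)) :
    Finset (Finset α) := P.parts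

lemma modScore_eq {α : Type*} [Fintype α] (G : SimpleGraph α)
    (P : Finpartition (univ : Finset α)) :
    modScore G P = (∑ A ∈ cparts P, (edgesIn G A : ℝ)) / (G.edgeFinset.card : ℝ)
      - (∑ A ∈ cparts P, (vol G A : ℝ) ^ 2) / (4 * (G.edgeFinset.card : ℝ) ^ 2) := rfl

lemma cparts_exists_mem {α : Type*} [Fintype α] (P : Finpartition (univ : Finset α))
    (a : α) : ∃ t ∈ cparts P, a ∈ t := P.exists_mem (mem_univ a)

lemma cparts_disjoint {α : Type*} [Fintype α] (P : Finpartition (univ : Finset α)) :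
    (cparts P : Set (Finset α)).PairwiseDisjoint id := P.disjoint

/-- The trivial partition, with the classical instances used in `modScore`. -/
def triv (α : Type*) [Fintype α] [Nonempty α] : Finpartition (univ : Finset α) :=
  Finpartition.indiscrete univ_nonempty.ne_empty

lemma cparts_triv (α : Type*) [Fintype α] [Nonempty α] :
    cparts (triv α) = {(univ : Finset α)} := rfl

/-- Any partition of the star has nonpositive modularity. -/
lemma star_score_nonpos (n : ℕ) (hn : 1 ≤ n) (x : ℝ)
    (hx : ∃ P, modScore (completeBipartiteGraph (Fin 1) (Fin n)) P = x) : x ≤ 0 := by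
  obtain ⟨P, rfl⟩ := hx
  have hm : ((completeBipartiteGraph (Fin 1) (Fin n)).edgeFinset.card : ℝ) = n := by
    rw [star_card_edges]
  have hnpos : (0 : ℝ) < n := by exact_mod_cast hn
  obtain ⟨A₀, hA₀mem, hA₀⟩ := cparts_exists_mem P (Sum.inl (0 : Fin 1))
  set k : ℕ := A₀.toRight.card with hk
  have hsum1 : (∑ A ∈ cparts P,
      (edgesIn (completeBipartiteGraph (Fin 1) (Fin n)) A : ℝ)) = k := by
    rw [Finset.sum_eq_single A₀]
    · rw [star_edgesIn, if_pos hA₀]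
    · intro B hB hBne
      have hdisj : Disjoint A₀ B :=
        cparts_disjoint P (Finset.mem_coe.mpr hA₀mem) (Finset.mem_coe.mpr hB) (Ne.symm hBne)
      have hnot : Sum.inl (0 : Fin 1) ∉ B := Finset.disjoint_left.mp hdisj hA₀
      rw [star_edgesIn, if_neg hnot]
      simp
    · intro h; exact absurd hA₀mem h
  have hvolA₀ : (vol (completeBipartiteGraph (Fin 1) (Fin n)) A₀ : ℝ) = n + k := by
    rw [star_vol, star_toLeft_card_of_mem hA₀]
    push_cast; ring
  have hsum2 : ((n : ℝ) + k) ^ 2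
      ≤ ∑ A ∈ cparts P, (vol (completeBipartiteGraph (Fin 1) (Fin n)) A : ℝ) ^ 2 := by
    rw [← hvolA₀]
    exact Finset.single_le_sum
      (f := fun A => (vol (completeBipartiteGraph (Fin 1) (Fin n)) A : ℝ) ^ 2)
      (fun A _ => sq_nonneg _) hA₀mem
  rw [modScore_eq, hsum1, hm]
  have hstep : ((n : ℝ) + k) ^ 2 / (4 * (n : ℝ) ^ 2)
      ≤ (∑ A ∈ cparts P, (vol (completeBipartiteGraph (Fin 1) (Fin n)) A : ℝ) ^ 2)
        / (4 * (n : ℝ) ^ 2) := by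
    gcongr
  have hfin : (k : ℝ) / n - ((n : ℝ) + k) ^ 2 / (4 * (n : ℝ) ^ 2) ≤ 0 := by
    rw [sub_nonpos, div_le_div_iff₀ hnpos (by positivity)]
    nlinarith [sq_nonneg ((n : ℝ) - k), hnpos]
  linarith

end StarAux

/-- The star `K_{1,n}` (`n ≥ 1`) has maximum modularity 0. -/
theorem maxMod_star (n : ℕ) (hn : 1 ≤ n) :
    maxMod (completeBipartiteGraph (Fin 1) (Fin n)) = 0 := by
  have hm : ((completeBipartiteGraph (Fin 1) (Fin n)).edgeFinset.card : ℝ) = n := by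
    rw [StarAux.star_card_edges]
  have hn0 : ((n : ℝ)) ≠ 0 := by
    have : (0 : ℝ) < n := by exact_mod_cast hn
    exact ne_of_gt this
  have h0 : ∃ P, modScore (completeBipartiteGraph (Fin 1) (Fin n)) P = 0 := by
    refine ⟨StarAux.triv _, ?_⟩
    rw [StarAux.modScore_eq, StarAux.cparts_triv, Finset.sum_singleton, Finset.sum_singleton]
    have he : edgesIn (completeBipartiteGraph (Fin 1) (Fin n)) univ
        = (completeBipartiteGraph (Fin 1) (Fin n)).edgeFinset.card := by
      unfold edgesIn
      rw [Finset.filter_congr_decidable,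
        Finset.filter_true_of_mem (fun e _ => fun v _ => Finset.mem_univ v)]
    have hv : (vol (completeBipartiteGraph (Fin 1) (Fin n)) univ : ℝ) = 2 * n := by
      have h2 : vol (completeBipartiteGraph (Fin 1) (Fin n)) univ
          = 2 * (completeBipartiteGraph (Fin 1) (Fin n)).edgeFinset.card :=
        SimpleGraph.sum_degrees_eq_twice_card_edges _
      rw [h2]
      push_cast [StarAux.star_card_edges]
      ring
    rw [he, hm, hv]
    field_simp
    ring
  rw [maxMod]
  apply le_antisymm
  · exact Real.sSup_le (fun x hx => StarAux.star_score_nonpos n hn x hx) le_rfl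
  · exact le_csSup ⟨0, fun x hx => StarAux.star_score_nonpos n hn x hx⟩ h0

end
end

section
/- A graph consisting of c ≥ 1 disjoint copies of the complete graph K_k (k ≥ 2) has maximum modularity equal to 1 − 1/c. -/
open Finset
open scoped Classical

noncomputable section

variable {V : Type*} [Fintype V]

abbrev cliqueGraph (c k : ℕ) : SimpleGraph (Fin c × Fin k) :=
  SimpleGraph.fromRel (fun u v => u.1 = v.1)

lemma cg_adj {c k : ℕ} {u v : Fin c × Fin k} :
    (cliqueGraph c k).Adj u v ↔ u ≠ v ∧ u.1 = v.1 := by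
  simp only [cliqueGraph, SimpleGraph.fromRel_adj]
  constructor
  · rintro ⟨h1, h2 | h2⟩
    · exact ⟨h1, h2⟩
    · exact ⟨h1, h2.symm⟩
  · rintro ⟨h1, h2⟩; exact ⟨h1, Or.inl h2⟩

lemma card_clique {c k : ℕ} (i : Fin c) :
    ((univ : Finset (Fin c × Fin k)).filter (fun p => p.1 = i)).card = k := by
  have : (univ : Finset (Fin c × Fin k)).filter (fun p => p.1 = i)
      = ({i} : Finset (Fin c)) ×ˢ (univ : Finset (Fin k)) := by
    ext p; simp only [Finset.mem_filter, Finset.mem_univ, true_and, Finset.mem_product,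
      Finset.mem_singleton, and_true]
  rw [this, Finset.card_product]; simp

lemma cg_degree {c k : ℕ} (v : Fin c × Fin k) :
    (cliqueGraph c k).degree v = k - 1 := by
  classical
  rw [← SimpleGraph.card_neighborFinset_eq_degree]
  have : (cliqueGraph c k).neighborFinset v
      = ((univ : Finset (Fin c × Fin k)).filter (fun p => p.1 = v.1)).erase v := by
    ext u
    simp only [SimpleGraph.mem_neighborFinset, Finset.mem_erase, Finset.mem_filter,
      Finset.mem_univ, true_and, cg_adj]
    constructor
    · rintro ⟨h1, h2⟩; exact ⟨fun h => h1 h.symm, h2.symm⟩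
    · rintro ⟨h1, h2⟩; exact ⟨fun h => h1 h.symm, h2.symm⟩
  rw [this, Finset.card_erase_of_mem (by simp), card_clique]

lemma cg_edgeFinset_eq {c k : ℕ} :
    @SimpleGraph.edgeFinset _ (cliqueGraph c k)
      (@SimpleGraph.fintypeEdgeSet _ _ _ (fun a b => Classical.propDecidable _))
      = (cliqueGraph c k).edgeFinset := by
  congr 1; exact Subsingleton.elim _ _

lemma edgesIn_norm {c k : ℕ} (A : Finset (Fin c × Fin k)) :
    edgesIn (cliqueGraph c k) A
      = ((cliqueGraph c k).edgeFinset.filter (fun e => ∀ v ∈ e, v ∈ A)).card := by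
  unfold edgesIn
  convert rfl

lemma edgesIn_subclique {c k : ℕ} (i : Fin c) (S : Finset (Fin c × Fin k))
    (hS : ∀ p ∈ S, p.1 = i) :
    edgesIn (cliqueGraph c k) S = S.card.choose 2 := by
  rw [edgesIn_norm, ← Sym2.card_image_offDiag]
  congr 1
  ext e
  induction e using Sym2.ind with
  | _ u v =>
    constructor
    · rintro he
      rw [Finset.mem_filter] at he
      obtain ⟨hef, hall⟩ := he
      rw [SimpleGraph.mem_edgeFinset, SimpleGraph.mem_edgeSet, cg_adj] at hef
      have hu : u ∈ S := hall u (Sym2.mem_mk_left u v)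
      have hv : v ∈ S := hall v (Sym2.mem_mk_right u v)
      exact Finset.mem_image.2 ⟨(u, v), Finset.mem_offDiag.2 ⟨hu, hv, hef.1⟩, rfl⟩
    · intro h
      obtain ⟨⟨a, b⟩, hab, he⟩ := Finset.mem_image.1 h
      obtain ⟨ha, hb, hne⟩ := Finset.mem_offDiag.1 hab
      have hmem : ∀ w ∈ s(u, v), w ∈ S := by
        intro w hw
        rcases Sym2.mem_iff.1 hw with h' | h' <;> subst h'
        · rcases Sym2.eq_iff.1 he with ⟨h1, h2⟩ | ⟨h1, h2⟩
          · exact h1 ▸ ha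
          · exact h2 ▸ hb
        · rcases Sym2.eq_iff.1 he with ⟨h1, h2⟩ | ⟨h1, h2⟩
          · exact h2 ▸ hb
          · exact h1 ▸ ha
      have hu : u ∈ S := hmem u (Sym2.mem_mk_left u v)
      have hv : v ∈ S := hmem v (Sym2.mem_mk_right u v)
      have hne0 : a ≠ b := hne
      have hne' : u ≠ v := by
        rcases Sym2.eq_iff.1 he with ⟨h1, h2⟩ | ⟨h1, h2⟩
        · subst h1; subst h2; exact hne0
        · subst h1; subst h2; exact hne0.symm
      refine Finset.mem_filter.2 ⟨?_, hmem⟩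
      rw [SimpleGraph.mem_edgeFinset, SimpleGraph.mem_edgeSet, cg_adj]
      exact ⟨hne', (hS u hu).trans (hS v hv).symm⟩

lemma edgesIn_decomp {c k : ℕ} (A : Finset (Fin c × Fin k)) :
    edgesIn (cliqueGraph c k) A
      = ∑ i : Fin c, edgesIn (cliqueGraph c k) (A.filter (fun p => p.1 = i)) := by
  classical
  have hdisj : ∀ i ∈ (univ : Finset (Fin c)), ∀ j ∈ (univ : Finset (Fin c)), i ≠ j →
      Disjoint
        ((cliqueGraph c k).edgeFinset.filter
          (fun e => ∀ v ∈ e, v ∈ A.filter (fun p => p.1 = i)))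
        ((cliqueGraph c k).edgeFinset.filter
          (fun e => ∀ v ∈ e, v ∈ A.filter (fun p => p.1 = j))) := by
    intro i _ j _ hij
    rw [Finset.disjoint_left]
    intro e he1 he2
    induction e using Sym2.ind with
    | _ u v =>
      have h1 := (Finset.mem_filter.1 he1).2 u (Sym2.mem_mk_left u v)
      have h2 := (Finset.mem_filter.1 he2).2 u (Sym2.mem_mk_left u v)
      exact hij (((Finset.mem_filter.1 h1).2).symm.trans (Finset.mem_filter.1 h2).2)
  have hset : (cliqueGraph c k).edgeFinset.filter (fun e => ∀ v ∈ e, v ∈ A)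
      = (univ : Finset (Fin c)).biUnion (fun i =>
          (cliqueGraph c k).edgeFinset.filter
            (fun e => ∀ v ∈ e, v ∈ A.filter (fun p => p.1 = i))) := by
    ext e
    induction e using Sym2.ind with
    | _ u v =>
      simp only [Finset.mem_biUnion, Finset.mem_univ, true_and]
      constructor
      · intro he
        obtain ⟨hef, hall⟩ := Finset.mem_filter.1 he
        have hfst : u.1 = v.1 := by
          rw [SimpleGraph.mem_edgeFinset, SimpleGraph.mem_edgeSet, cg_adj] at hef
          exact hef.2
        refine ⟨u.1, Finset.mem_filter.2 ⟨hef, ?_⟩⟩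
        intro w hw
        refine Finset.mem_filter.2 ⟨hall w hw, ?_⟩
        rcases Sym2.mem_iff.1 hw with h' | h' <;> subst h'
        · rfl
        · exact hfst.symm
      · rintro ⟨i, hi⟩
        obtain ⟨hef, hall⟩ := Finset.mem_filter.1 hi
        exact Finset.mem_filter.2 ⟨hef, fun w hw => (Finset.mem_filter.1 (hall w hw)).1⟩
  simp only [edgesIn_norm]
  rw [hset, Finset.card_biUnion hdisj]

lemma cg_vol {c k : ℕ} (A : Finset (Fin c × Fin k)) :
    vol (cliqueGraph c k) A = A.card * (k - 1) := by
  unfold vol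
  rw [Finset.card_eq_sum_ones, Finset.sum_mul]
  refine Finset.sum_congr rfl fun v _ => ?_
  rw [one_mul]; convert cg_degree v

lemma cg_card_edges {c k : ℕ} :
    (cliqueGraph c k).edgeFinset.card = c * k.choose 2 := by
  have h0 : edgesIn (cliqueGraph c k) univ = (cliqueGraph c k).edgeFinset.card := by
    rw [edgesIn_norm, Finset.filter_true_of_mem (fun e _ => fun v _ => Finset.mem_univ v)]
  rw [← h0, edgesIn_decomp]
  have h1 : ∀ i : Fin c,
      edgesIn (cliqueGraph c k) ((univ : Finset (Fin c × Fin k)).filter (fun p => p.1 = i))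
        = k.choose 2 := fun i => by
    rw [edgesIn_subclique i _ (fun p hp => (Finset.mem_filter.1 hp).2), card_clique]
  simp [h1, Finset.sum_const, Finset.card_univ]

lemma part_filter_sum {W : Type*} [Fintype W] (P : Finpartition (univ : Finset W))
    (q : W → Prop) [DecidablePred q] :
    ∑ A ∈ P.parts, (A.filter q).card = (univ.filter q).card := by
  classical
  have hd : ∀ A ∈ P.parts, ∀ B ∈ P.parts, A ≠ B →
      Disjoint (A.filter q) (B.filter q) := by
    intro A hA B hB hAB
    exact Finset.disjoint_filter_filter (P.disjoint hA hB hAB)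
  have hset : (univ : Finset W).filter q = P.parts.biUnion (fun A => A.filter q) := by
    ext v
    simp only [Finset.mem_filter, Finset.mem_univ, true_and, Finset.mem_biUnion]
    constructor
    · intro hq
      obtain ⟨A, hA, hvA⟩ := P.exists_mem (Finset.mem_univ v)
      exact ⟨A, hA, hvA, hq⟩
    · rintro ⟨A, hA, hv, hq⟩
      exact hq
  rw [hset, Finset.card_biUnion hd]

lemma fiber_inj {W I : Type*} [Fintype W] (f : W → I) (hf : Function.Surjective f)
    {i j : I} (h : (univ : Finset W).filter (fun v => f v = i)
      = (univ : Finset W).filter (fun v => f v = j)) : i = j := by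
  obtain ⟨v, rfl⟩ := hf i
  have hv : v ∈ (univ : Finset W).filter (fun w => f w = f v) := by simp
  rw [h] at hv
  exact (Finset.mem_filter.1 hv).2

def fiberPartition {W I : Type*} [Fintype W] [Fintype I] (f : W → I)
    (hf : Function.Surjective f) : Finpartition (univ : Finset W) where
  parts := (univ : Finset I).image (fun i => (univ : Finset W).filter (fun v => f v = i))
  supIndep := by
    apply Finset.supIndep_iff_pairwiseDisjoint.2
    intro A hA B hB hAB
    simp only [Finset.coe_image, Set.mem_image, Finset.mem_coe] at hA hB
    obtain ⟨i, _, rfl⟩ := hA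
    obtain ⟨j, _, rfl⟩ := hB
    have hij : i ≠ j := fun h => hAB (by rw [h])
    rw [Function.onFun, Finset.disjoint_left]
    intro p hp1 hp2
    exact hij ((Finset.mem_filter.1 hp1).2.symm.trans (Finset.mem_filter.1 hp2).2)
  sup_parts := by
    apply Finset.Subset.antisymm
    · intro v _
      exact Finset.mem_univ v
    · intro v _
      rw [Finset.mem_sup]
      exact ⟨(univ : Finset W).filter (fun w => f w = f v),
        Finset.mem_image.2 ⟨f v, Finset.mem_univ _, rfl⟩, by simp⟩
  bot_notMem := by
    intro h
    obtain ⟨i, _, hi⟩ := Finset.mem_image.1 h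
    obtain ⟨v, rfl⟩ := hf i
    have hv : v ∈ (univ : Finset W).filter (fun w => f w = f v) := by simp
    rw [hi] at hv
    simp at hv

lemma fiberPartition_sum {W I : Type*} [Fintype W] [Fintype I] (f : W → I)
    (hf : Function.Surjective f) (g : Finset W → ℝ) :
    ∑ A ∈ (fiberPartition f hf).parts, g A
      = ∑ i : I, g ((univ : Finset W).filter (fun v => f v = i)) :=
  Finset.sum_image (fun i _ j _ h => fiber_inj f hf h)

lemma card_fiber {c k : ℕ} (i : Fin c) (S : Finset (Fin c × Fin k))
    (hS : ∀ p, p ∈ S ↔ p.1 = i) : S.card = k := by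
  have h : S = (univ : Finset (Fin c × Fin k)).filter (fun p => p.1 = i) :=
    Finset.ext fun p => by simp [hS p]
  rw [h]
  exact card_clique i

lemma modScore_P0 {c k : ℕ} (hc : 1 ≤ c) (hk : 2 ≤ k) :
    modScore (cliqueGraph c k)
      (fiberPartition (Prod.fst : Fin c × Fin k → Fin c)
        (fun i => ⟨(i, ⟨0, by omega⟩), rfl⟩))
      = 1 - 1 / (c : ℝ) := by
  classical
  have hK : ((k.choose 2 : ℕ) : ℝ) = k * ((k : ℝ) - 1) / 2 := Nat.cast_choose_two ℝ k
  have hkR : (2 : ℝ) ≤ (k : ℝ) := by exact_mod_cast hk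
  have hcR : (1 : ℝ) ≤ (c : ℝ) := by exact_mod_cast hc
  have hm : ((cliqueGraph c k).edgeFinset.card : ℝ) = c * ((k.choose 2 : ℕ) : ℝ) := by
    rw [cg_card_edges]; push_cast; ring
  unfold modScore
  simp only [cg_edgeFinset_eq]
  erw [fiberPartition_sum, fiberPartition_sum]
  rw [hm]
  have key : ∀ S : Fin c → Finset (Fin c × Fin k), (∀ i p, p ∈ S i ↔ p.1 = i) →
      (∑ i, (edgesIn (cliqueGraph c k) (S i) : ℝ)) / ((c : ℝ) * ((k.choose 2 : ℕ) : ℝ))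
        - (∑ i, (vol (cliqueGraph c k) (S i) : ℝ) ^ 2)
            / (4 * ((c : ℝ) * ((k.choose 2 : ℕ) : ℝ)) ^ 2)
        = 1 - 1 / (c : ℝ) := by
    intro S hS
    have hcard : ∀ i, (S i).card = k := fun i => card_fiber i (S i) (hS i)
    have h1 : ∀ i, (edgesIn (cliqueGraph c k) (S i) : ℝ) = ((k.choose 2 : ℕ) : ℝ) := fun i => by
      rw [edgesIn_subclique i _ (fun p hp => (hS i p).1 hp), hcard i]
    have h2 : ∀ i, (vol (cliqueGraph c k) (S i) : ℝ) = (k : ℝ) * ((k : ℝ) - 1) := fun i => by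
      rw [cg_vol, hcard i]; push_cast [Nat.cast_sub (by omega : 1 ≤ k)]; ring
    simp only [h1, h2, Finset.sum_const, Finset.card_univ, Fintype.card_fin, nsmul_eq_mul]
    rw [hK]
    have hc0 : (0 : ℝ) < (c : ℝ) := by linarith
    have hk1 : (0 : ℝ) < (k : ℝ) - 1 := by linarith
    field_simp
    ring
  exact key _ (fun i p => by
    simp only [Finset.mem_filter, Finset.mem_univ, true_and])

lemma key_ineq (c k S : ℝ) (hc : 1 ≤ c) (hk : 2 ≤ k) (hS0 : 0 ≤ S) (hS : S ≤ k ^ 2) :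
    (S - k) / 2 / (c * (k * (k - 1) / 2))
      - S * (k - 1) ^ 2 / (4 * (c * (k * (k - 1) / 2)) ^ 2)
      ≤ 1 / c - 1 / c ^ 2 := by
  have hc0 : 0 < c := by linarith
  have hk1 : 0 < k - 1 := by linarith
  have hk0 : 0 < k := by linarith
  have h1 : (S - k) / 2 / (c * (k * (k - 1) / 2)) = (S - k) / (c * k * (k - 1)) := by
    rw [eq_div_iff (by positivity), div_mul_eq_mul_div, div_eq_iff (by positivity)]
    ring
  have h2 : S * (k - 1) ^ 2 / (4 * (c * (k * (k - 1) / 2)) ^ 2) = S / (c ^ 2 * k ^ 2) := by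
    rw [eq_div_iff (by positivity), div_mul_eq_mul_div, div_eq_iff (by positivity)]
    ring
  rw [h1, h2]
  have key : 1 / c - 1 / c ^ 2 - ((S - k) / (c * k * (k - 1)) - S / (c ^ 2 * k ^ 2))
      = (k ^ 2 - S) * (c * k - k + 1) / (c ^ 2 * k ^ 2 * (k - 1)) := by
    field_simp
    ring
  have hpos : 0 ≤ (k ^ 2 - S) * (c * k - k + 1) / (c ^ 2 * k ^ 2 * (k - 1)) := by
    apply div_nonneg _ (by positivity)
    apply mul_nonneg (by linarith)
    nlinarith
  linarith

lemma modScore_le {c k : ℕ} (hc : 1 ≤ c) (hk : 2 ≤ k)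
    (P : @Finpartition (Finset (Fin c × Fin k))
      (@Finset.instLattice _ (fun a b => Classical.propDecidable (a = b)))
      Finset.instOrderBot univ) :
    modScore (cliqueGraph c k) P ≤ 1 - 1 / (c : ℝ) := by
  classical
  have hTi0 := fun i : Fin c => part_filter_sum P (fun p => p.1 = i)
  obtain ⟨parts, hsupi, hsupp, hnbm⟩ := P
  dsimp only at hTi0
  unfold modScore
  dsimp only
  have hK : ((k.choose 2 : ℕ) : ℝ) = k * ((k : ℝ) - 1) / 2 := Nat.cast_choose_two ℝ k
  have hkR : (2 : ℝ) ≤ (k : ℝ) := by exact_mod_cast hk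
  have hcR : (1 : ℝ) ≤ (c : ℝ) := by exact_mod_cast hc
  have hc0 : (0 : ℝ) < (c : ℝ) := by linarith
  have hk1 : (0 : ℝ) < (k : ℝ) - 1 := by linarith
  have hm : ((cliqueGraph c k).edgeFinset.card : ℝ) = c * ((k.choose 2 : ℕ) : ℝ) := by
    rw [cg_card_edges]; push_cast; ring
  have hMval : ((cliqueGraph c k).edgeFinset.card : ℝ)
      = (c : ℝ) * ((k : ℝ) * ((k : ℝ) - 1) / 2) := by rw [hm, hK]
  have hM0 : (0 : ℝ) < ((cliqueGraph c k).edgeFinset.card : ℝ) := by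
    rw [hMval]; positivity
  -- per part: edges
  have he : ∀ A ∈ parts, (edgesIn (cliqueGraph c k) A : ℝ)
      = ∑ i : Fin c, (((A.filter (fun p => p.1 = i)).card : ℝ) ^ 2
          - ((A.filter (fun p => p.1 = i)).card : ℝ)) / 2 := by
    intro A _
    rw [edgesIn_decomp A]
    push_cast
    refine Finset.sum_congr rfl fun i _ => ?_
    rw [edgesIn_subclique i _ (fun p hp => (Finset.mem_filter.1 hp).2),
      Nat.cast_choose_two ℝ]
    ring
  -- per part: volume lower bound
  have hv : ∀ A ∈ parts,
      (∑ i : Fin c, ((A.filter (fun p => p.1 = i)).card : ℝ) ^ 2) * ((k : ℝ) - 1) ^ 2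
        ≤ (vol (cliqueGraph c k) A : ℝ) ^ 2 := by
    intro A _
    have hcardA : A.card = ∑ i : Fin c, (A.filter (fun p => p.1 = i)).card :=
      Finset.card_eq_sum_card_fiberwise (fun x _ => Finset.mem_univ x.1)
    have h1 : (vol (cliqueGraph c k) A : ℝ)
        = (∑ i : Fin c, ((A.filter (fun p => p.1 = i)).card : ℝ)) * ((k : ℝ) - 1) := by
      rw [cg_vol, hcardA]
      push_cast [Nat.cast_sub (by omega : 1 ≤ k)]
      ring
    rw [h1, mul_pow]
    exact mul_le_mul_of_nonneg_right
      (Finset.sum_sq_le_sq_sum_of_nonneg (fun i _ => by positivity)) (by positivity)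
  -- per clique: totals
  have hTi : ∀ i : Fin c,
      ∑ A ∈ parts, ((A.filter (fun p => p.1 = i)).card : ℝ) = (k : ℝ) := by
    intro i
    have h := hTi0 i
    rw [card_clique] at h
    exact_mod_cast h
  have hSi : ∀ i : Fin c,
      ∑ A ∈ parts, ((A.filter (fun p => p.1 = i)).card : ℝ) ^ 2 ≤ (k : ℝ) ^ 2 := by
    intro i
    calc ∑ A ∈ parts, ((A.filter (fun p => p.1 = i)).card : ℝ) ^ 2
        ≤ (∑ A ∈ parts, ((A.filter (fun p => p.1 = i)).card : ℝ)) ^ 2 :=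
          Finset.sum_sq_le_sq_sum_of_nonneg (fun A _ => by positivity)
      _ = (k : ℝ) ^ 2 := by rw [hTi i]
  rw [Finset.sum_congr rfl he]
  rw [cg_edgeFinset_eq]
  calc (∑ A ∈ parts, ∑ i : Fin c, (((A.filter (fun p => p.1 = i)).card : ℝ) ^ 2
          - ((A.filter (fun p => p.1 = i)).card : ℝ)) / 2)
            / ((cliqueGraph c k).edgeFinset.card : ℝ)
        - (∑ A ∈ parts, (vol (cliqueGraph c k) A : ℝ) ^ 2)
            / (4 * ((cliqueGraph c k).edgeFinset.card : ℝ) ^ 2)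
      ≤ (∑ A ∈ parts, ∑ i : Fin c, (((A.filter (fun p => p.1 = i)).card : ℝ) ^ 2
          - ((A.filter (fun p => p.1 = i)).card : ℝ)) / 2)
            / ((cliqueGraph c k).edgeFinset.card : ℝ)
        - (∑ A ∈ parts, ∑ i : Fin c,
            ((A.filter (fun p => p.1 = i)).card : ℝ) ^ 2 * ((k : ℝ) - 1) ^ 2)
            / (4 * ((cliqueGraph c k).edgeFinset.card : ℝ) ^ 2) := by
        apply sub_le_sub_left
        apply div_le_div_of_nonneg_right ?_ (by positivity)
        exact Finset.sum_le_sum (fun A hA => by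
          rw [← Finset.sum_mul]; exact hv A hA)
    _ = ∑ i : Fin c,
          ((∑ A ∈ parts, (((A.filter (fun p => p.1 = i)).card : ℝ) ^ 2
              - ((A.filter (fun p => p.1 = i)).card : ℝ))) / 2
                / ((cliqueGraph c k).edgeFinset.card : ℝ)
            - (∑ A ∈ parts, ((A.filter (fun p => p.1 = i)).card : ℝ) ^ 2)
                * ((k : ℝ) - 1) ^ 2
                / (4 * ((cliqueGraph c k).edgeFinset.card : ℝ) ^ 2)) := by
        rw [Finset.sum_sub_distrib]
        congr 1
        · rw [Finset.sum_comm, Finset.sum_div]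
          refine Finset.sum_congr rfl fun i _ => ?_
          rw [← Finset.sum_div]
        · rw [Finset.sum_comm, Finset.sum_div]
          refine Finset.sum_congr rfl fun i _ => ?_
          rw [← Finset.sum_mul]
    _ ≤ ∑ i : Fin c, (1 / (c : ℝ) - 1 / (c : ℝ) ^ 2) := by
        refine Finset.sum_le_sum (fun i _ => ?_)
        have hsub : ∑ A ∈ parts, (((A.filter (fun p => p.1 = i)).card : ℝ) ^ 2
            - ((A.filter (fun p => p.1 = i)).card : ℝ))
            = (∑ A ∈ parts, ((A.filter (fun p => p.1 = i)).card : ℝ) ^ 2) - (k : ℝ) := by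
          rw [Finset.sum_sub_distrib, hTi i]
        rw [hsub, hMval]
        exact key_ineq (c : ℝ) (k : ℝ) _ hcR hkR
          (Finset.sum_nonneg fun A _ => by positivity) (hSi i)
    _ = 1 - 1 / (c : ℝ) := by
        rw [Finset.sum_const, Finset.card_univ, Fintype.card_fin, nsmul_eq_mul]
        field_simp

/-- A disjoint union of `c` copies of the complete graph `K_k` (`c ≥ 1`, `k ≥ 2`)
has maximum modularity `1 - 1/c`. -/
theorem maxMod_disjoint_cliques (c k : ℕ) (hc : 1 ≤ c) (hk : 2 ≤ k) :
    maxMod (SimpleGraph.fromRel (fun u v : Fin c × Fin k => u.1 = v.1)) =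
      1 - 1 / (c : ℝ) := by
  refine IsGreatest.csSup_eq ⟨⟨fiberPartition (Prod.fst : Fin c × Fin k → Fin c)
    (fun i => ⟨(i, ⟨0, by omega⟩), rfl⟩), modScore_P0 hc hk⟩, ?_⟩
  rintro x ⟨P, rfl⟩
  exact modScore_le hc hk P

end
end

section
/- Let G be a graph with m ≥ 1 edges and no isolated vertices. If 𝒜 is a partition of V(G) achieving the maximum modularity q*(G), then no part of 𝒜 consists of a single vertex. -/
open Finset
open scoped Classical

noncomputable section

variable {V : Type*} [Fintype V]

instance finpartitionFinite : Finite (Finpartition (univ : Finset V)) :=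
  Finite.of_injective (fun P => P.parts) (fun P Q h => by
    cases P; cases Q; simpa using h)

lemma sum_parts_eq (P : Finpartition (univ : Finset V)) (g : V → ℕ) :
    ∑ C ∈ P.parts, ∑ w ∈ C, g w = ∑ w, g w := by
  conv_rhs => rw [← P.biUnion_parts]
  rw [Finset.sum_biUnion P.supIndep.pairwiseDisjoint]
  rfl

lemma edgesIn_singleton (G : SimpleGraph V) (v : V) : edgesIn G {v} = 0 := by
  unfold edgesIn
  rw [Finset.card_eq_zero, Finset.eq_empty_iff_forall_notMem]
  intro e
  induction e using Sym2.ind with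
  | _ a b =>
    simp only [Finset.mem_filter, SimpleGraph.mem_edgeFinset, SimpleGraph.mem_edgeSet,
      Sym2.mem_iff, Finset.mem_singleton, forall_eq_or_imp, forall_eq]
    rintro ⟨hab, ha, hb⟩
    exact G.ne_of_adj hab (ha.trans hb.symm)

lemma edgesIn_insert (G : SimpleGraph V) (v : V) (B : Finset V) (hv : v ∉ B) :
    edgesIn G (insert v B) = edgesIn G B + (G.neighborFinset v ∩ B).card := by
  classical
  unfold edgesIn
  have h1 : (G.edgeFinset.filter (fun e => ∀ w ∈ e, w ∈ insert v B)) =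
      (G.edgeFinset.filter (fun e => ∀ w ∈ e, w ∈ B)) ∪
        ((G.neighborFinset v ∩ B).image (fun w => s(v, w))) := by
    ext e
    induction e using Sym2.ind with
    | _ a b =>
      simp only [Finset.mem_filter, Finset.mem_union, Finset.mem_image, Finset.mem_inter,
        SimpleGraph.mem_neighborFinset, SimpleGraph.mem_edgeFinset, SimpleGraph.mem_edgeSet,
        Sym2.mem_iff, Finset.mem_insert, forall_eq_or_imp, forall_eq, Sym2.eq_iff]
      constructor
      · rintro ⟨hab, (ha | ha), (hb | hb)⟩
        · exact absurd (ha.trans hb.symm) (G.ne_of_adj hab)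
        · subst ha; exact Or.inr ⟨b, ⟨hab, hb⟩, Or.inl ⟨rfl, rfl⟩⟩
        · subst hb; exact Or.inr ⟨a, ⟨hab.symm, ha⟩, Or.inr ⟨rfl, rfl⟩⟩
        · exact Or.inl ⟨hab, ha, hb⟩
      · rintro (⟨hab, ha, hb⟩ | ⟨w, ⟨hadj, hwB⟩, (⟨hva, hwb⟩ | ⟨hvb, hwa⟩)⟩)
        · exact ⟨hab, Or.inr ha, Or.inr hb⟩
        · subst hva; subst hwb; exact ⟨hadj, Or.inl rfl, Or.inr hwB⟩
        · subst hvb; subst hwa; exact ⟨hadj.symm, Or.inr hwB, Or.inl rfl⟩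
  rw [h1, Finset.card_union_of_disjoint, Finset.card_image_of_injective]
  · intro x y hxy
    exact Sym2.congr_right.mp hxy
  · rw [Finset.disjoint_left]
    intro e he hmem
    simp only [Finset.mem_image, Finset.mem_inter] at hmem
    obtain ⟨w, _, rfl⟩ := hmem
    rw [Finset.mem_filter] at he
    exact hv (he.2 v (Sym2.mem_mk_left v w))

/-- In a graph with no isolated vertices, no part of an optimal partition is a
single vertex. -/
theorem no_singleton_part (G : SimpleGraph V) (hm : 1 ≤ G.edgeFinset.card)
    (hiso : ∀ v : V, 0 < G.degree v) (P : Finpartition (univ : Finset V))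
    (hopt : modScore G P = maxMod G) :
    ∀ A ∈ P.parts, A.card ≠ 1 := by
  intro A hA hcard
  obtain ⟨v, rfl⟩ := Finset.card_eq_one.mp hcard
  set m := G.edgeFinset.card with hmdef
  set d := G.degree v with hddef
  have hd : 0 < d := hiso v
  have hcross : ∀ C : Finset V, (G.neighborFinset v ∩ C).card = ∑ w ∈ C, (if w ∈ G.neighborFinset v then 1 else 0) := by
    intro C
    have : G.neighborFinset v ∩ C = C.filter (· ∈ G.neighborFinset v) := by
      ext w; simp [and_comm]
    rw [this, Finset.card_filter]
  -- sum of cross counts over parts = d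
  have hsum_cross : ∑ C ∈ P.parts, (G.neighborFinset v ∩ C).card = d := by
    simp_rw [hcross]
    rw [sum_parts_eq]
    rw [← Finset.card_filter]
    have huf : Finset.univ.filter (· ∈ G.neighborFinset v) = G.neighborFinset v := by
      ext w; simp
    rw [huf, hddef]
    exact G.card_neighborFinset_eq_degree v
  -- cross count of {v} is 0
  have hcrossA : (G.neighborFinset v ∩ {v}).card = 0 := by
    rw [Finset.card_eq_zero, Finset.eq_empty_iff_forall_notMem]
    intro w hw
    simp only [Finset.mem_inter, SimpleGraph.mem_neighborFinset, Finset.mem_singleton] at hw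
    exact G.ne_of_adj hw.1 hw.2.symm
  -- volume sums
  have hvolA : vol G {v} = d := by simp [vol, hddef]
  have hsum_vol : ∑ C ∈ P.parts, vol G C = 2 * m := by
    unfold vol
    rw [sum_parts_eq]
    rw [G.sum_degrees_eq_twice_card_edges]
  have hvA : ({v} : Finset V) ∈ P.parts := hA
  have hsum_cross_erase : ∑ C ∈ P.parts.erase {v}, (G.neighborFinset v ∩ C).card = d := by
    rw [Finset.sum_erase (f := fun C => (G.neighborFinset v ∩ C).card) P.parts hcrossA,
      hsum_cross]
  have hsum_vol_erase : d + ∑ C ∈ P.parts.erase {v}, vol G C = 2 * m := by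
    rw [← hvolA, Finset.add_sum_erase _ _ hvA, hsum_vol]
  -- find a good part B
  have hkey : ∑ C ∈ P.parts.erase {v}, d * vol G C <
      ∑ C ∈ P.parts.erase {v}, 2 * m * (G.neighborFinset v ∩ C).card := by
    rw [← Finset.mul_sum, ← Finset.mul_sum, hsum_cross_erase]
    have h1 : d * (∑ C ∈ P.parts.erase {v}, vol G C) + d * d = 2 * m * d := by
      have := hsum_vol_erase
      nlinarith [hsum_vol_erase]
    have h2 : 0 < d * d := Nat.mul_pos hd hd
    omega
  obtain ⟨B, hBe, hBkey⟩ := Finset.exists_lt_of_sum_lt hkey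
  have hBA : B ≠ {v} := Finset.ne_of_mem_erase hBe
  have hBmem : B ∈ P.parts := Finset.mem_of_mem_erase hBe
  have hdisj : Disjoint ({v} : Finset V) B :=
    P.disjoint hvA hBmem (fun h => hBA h.symm)
  have hvB : v ∉ B := fun h => Finset.disjoint_left.mp hdisj (Finset.mem_singleton_self v) h
  set S := (P.parts.erase {v}).erase B with hSdef
  have hBS : B ∉ S := Finset.notMem_erase _ _
  have hP_eq : P.parts = insert {v} (insert B S) := by
    rw [hSdef, Finset.insert_erase hBe, Finset.insert_erase hvA]
  have hAS : ({v} : Finset V) ∉ insert B S := by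
    rw [hP_eq] at hvA
    intro h
    rcases Finset.mem_insert.mp h with h | h
    · exact hBA h.symm
    · exact Finset.ne_of_mem_erase (Finset.mem_of_mem_erase h) rfl
  have hSsub : ∀ C ∈ S, C ∈ P.parts ∧ C ≠ {v} ∧ C ≠ B := by
    intro C hC
    exact ⟨Finset.mem_of_mem_erase (Finset.mem_of_mem_erase hC),
      Finset.ne_of_mem_erase (Finset.mem_of_mem_erase hC), Finset.ne_of_mem_erase hC⟩
  have hUdisj : ∀ C ∈ S, Disjoint ({v} ∪ B) C := by
    intro C hC
    obtain ⟨hCm, hCv, hCB⟩ := hSsub C hC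
    rw [Finset.disjoint_union_left]
    exact ⟨P.disjoint hvA hCm (fun h => hCv h.symm), P.disjoint hBmem hCm (fun h => hCB h.symm)⟩
  have hUS : ({v} ∪ B) ∉ S := by
    intro h
    exact Finset.disjoint_left.mp (hUdisj _ h)
      (Finset.mem_union_left _ (Finset.mem_singleton_self v))
      (by rw [hP_eq] at *; exact (Finset.mem_union_left _ (Finset.mem_singleton_self v)))
  -- the merged partition
  have hUne : ({v} ∪ B : Finset V).Nonempty := ⟨v, Finset.mem_union_left _ (Finset.mem_singleton_self v)⟩
  let Q : Finpartition (univ : Finset V) :=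
    { parts := insert ({v} ∪ B) S
      supIndep := by
        rw [Finset.supIndep_iff_pairwiseDisjoint]
        intro C hC D hD hne
        simp only [Finset.coe_insert, Set.mem_insert_iff, Finset.mem_coe] at hC hD
        rcases hC with rfl | hC <;> rcases hD with rfl | hD
        · exact absurd rfl hne
        · exact hUdisj D hD
        · exact (hUdisj C hC).symm
        · exact P.disjoint (hSsub C hC).1 (hSsub D hD).1 hne
      sup_parts := by
        have hP := P.sup_parts
        rw [hP_eq, Finset.sup_insert, Finset.sup_insert] at hP
        rw [Finset.sup_insert, ← hP]
        simp only [id]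
        ext x
        simp [or_assoc]
      bot_notMem := by
        intro h
        rcases Finset.mem_insert.mp h with h | h
        · exact absurd h.symm (Finset.nonempty_iff_ne_empty.mp hUne)
        · exact P.bot_notMem (hSsub _ h).1 }
  have hQparts : Q.parts = insert ({v} ∪ B) S := rfl
  -- edge count identity
  have hUB : ({v} ∪ B : Finset V) = insert v B := by ext w; simp
  set e := (G.neighborFinset v ∩ B).card with hedef
  have hedges : edgesIn G ({v} ∪ B) = edgesIn G B + e := by
    rw [hUB, edgesIn_insert G v B hvB, hedef]
  have hvolU : vol G ({v} ∪ B) = d + vol G B := by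
    rw [hUB]
    unfold vol
    rw [Finset.sum_insert hvB, hddef]
  -- modularity difference
  have hsumE : ∑ C ∈ Q.parts, (edgesIn G C : ℝ) = (∑ C ∈ P.parts, (edgesIn G C : ℝ)) + e := by
    rw [hQparts, hP_eq, Finset.sum_insert hUS, Finset.sum_insert hAS, Finset.sum_insert hBS,
      hedges, edgesIn_singleton]
    push_cast
    ring
  have hsumV : ∑ C ∈ Q.parts, (vol G C : ℝ) ^ 2 =
      (∑ C ∈ P.parts, (vol G C : ℝ) ^ 2) + 2 * d * vol G B := by
    rw [hQparts, hP_eq, Finset.sum_insert hUS, Finset.sum_insert hAS, Finset.sum_insert hBS,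
      hvolU, hvolA]
    push_cast
    ring
  have hm' : (0 : ℝ) < m := by exact_mod_cast hm
  have hkeyR : (d : ℝ) * vol G B < 2 * m * e := by exact_mod_cast hBkey
  have hgt : modScore G P < modScore G Q := by
    unfold modScore
    rw [← hmdef, hsumE, hsumV]
    have h4 : (0 : ℝ) < 4 * (m : ℝ) ^ 2 := mul_pos (by norm_num) (pow_pos hm' 2)
    rw [add_div, add_div]
    have h5 : (0 : ℝ) < (e : ℝ) / m - (2 * d * vol G B) / (4 * (m : ℝ) ^ 2) := by
      rw [sub_pos, div_lt_div_iff₀ h4 hm']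
      nlinarith [hkeyR, hm']
    linarith
  have hle : modScore G Q ≤ maxMod G := by
    have hfin : (Set.range (modScore G)).Finite := Set.finite_range _
    exact le_csSup hfin.bddAbove ⟨Q, rfl⟩
  rw [hopt] at hgt
  exact absurd (lt_of_le_of_lt hle hgt) (lt_irrefl _)

end
end

section
/- Let G have m ≥ 1 edges and connected components C₁,…,C_ℓ. Then q*(G) = ∑_{i=1}^ℓ q*(Cᵢ, G), where q*(H, G) is the maximum over partitions 𝒜_H of V(H) of (1/m)∑_{A∈𝒜_H} e(A) − (1/(4m²))∑_{A∈𝒜_H} vol_G(A)². -/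
open Finset
open scoped Classical

noncomputable section

variable {V : Type*} [Fintype V]

/-- `q*(H,G)`: maximum contribution to modularity over partitions of a vertex
subset `S`, with edge counts and volumes computed in `G`. -/
def qStarOn (G : SimpleGraph V) (S : Finset V) : ℝ :=
  sSup {x : ℝ | ∃ P : Finpartition S,
    x = (∑ A ∈ P.parts, (edgesIn G A : ℝ)) / (G.edgeFinset.card : ℝ)
        - (∑ A ∈ P.parts, (vol G A : ℝ) ^ 2) / (4 * (G.edgeFinset.card : ℝ) ^ 2)}

/-! ### Auxiliary definitions and lemmas -/

/-- The modularity score of a family of vertex sets. -/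
def score (G : SimpleGraph V) (𝒜 : Finset (Finset V)) : ℝ :=
  (∑ A ∈ 𝒜, (edgesIn G A : ℝ)) / (G.edgeFinset.card : ℝ)
    - (∑ A ∈ 𝒜, (vol G A : ℝ) ^ 2) / (4 * (G.edgeFinset.card : ℝ) ^ 2)

lemma modScore_eq_score (G : SimpleGraph V) (P : Finpartition (univ : Finset V)) :
    modScore G P = score G P.parts := rfl

lemma qStarOn_eq (G : SimpleGraph V) (S : Finset V) :
    qStarOn G S = sSup {x : ℝ | ∃ P : Finpartition S, x = score G P.parts} := rfl

lemma qSet_eq_range (G : SimpleGraph V) (S : Finset V) :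
    {x : ℝ | ∃ P : Finpartition S, x = score G P.parts}
      = Set.range (fun P : Finpartition S => score G P.parts) := by
  ext x; simp [eq_comm]

lemma qSet_finite (G : SimpleGraph V) (S : Finset V) :
    {x : ℝ | ∃ P : Finpartition S, x = score G P.parts}.Finite := by
  rw [qSet_eq_range]; exact Set.finite_range _

lemma qSet_nonempty (G : SimpleGraph V) (S : Finset V) :
    {x : ℝ | ∃ P : Finpartition S, x = score G P.parts}.Nonempty :=
  ⟨score G (⊥ : Finpartition S).parts, ⟨⊥, rfl⟩⟩

lemma qStarOn_mem (G : SimpleGraph V) (S : Finset V) :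
    ∃ P : Finpartition S, qStarOn G S = score G P.parts := by
  have := Set.Nonempty.csSup_mem (qSet_nonempty G S) (qSet_finite G S)
  rwa [← qStarOn_eq] at this

lemma le_qStarOn (G : SimpleGraph V) (S : Finset V) (P : Finpartition S) :
    score G P.parts ≤ qStarOn G S := by
  rw [qStarOn_eq]
  exact le_csSup ((qSet_finite G S).bddAbove) ⟨P, rfl⟩

lemma maxMod_eq (G : SimpleGraph V) :
    maxMod G = sSup {x : ℝ | ∃ P : Finpartition (univ : Finset V), x = score G P.parts} := by
  unfold maxMod
  congr 1
  ext x
  simp [modScore_eq_score, eq_comm]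

lemma le_maxMod (G : SimpleGraph V) (P : Finpartition (univ : Finset V)) :
    score G P.parts ≤ maxMod G := by
  rw [maxMod_eq]
  exact le_csSup ((qSet_finite G univ).bddAbove) ⟨P, rfl⟩

lemma maxMod_le (G : SimpleGraph V) {b : ℝ}
    (h : ∀ P : Finpartition (univ : Finset V), score G P.parts ≤ b) : maxMod G ≤ b := by
  rw [maxMod_eq]
  exact csSup_le (qSet_nonempty G univ) (by rintro x ⟨P, rfl⟩; exact h P)

section Components

variable (G : SimpleGraph V)

lemma mem_suppF {C : G.ConnectedComponent} {v : V} :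
    v ∈ C.supp.toFinset ↔ G.connectedComponentMk v = C := by
  simp [SimpleGraph.ConnectedComponent.mem_supp_iff]

lemma suppF_disjoint {C C' : G.ConnectedComponent} (h : C ≠ C') :
    Disjoint C.supp.toFinset C'.supp.toFinset := by
  rw [Finset.disjoint_left]
  intro v hv hv'
  rw [mem_suppF] at hv hv'
  exact h (hv ▸ hv')

/-- Each edge lies inside a single connected component. -/
lemma edgesIn_empty' (G : SimpleGraph V) : edgesIn G (∅ : Finset V) = 0 := by
  unfold edgesIn
  rw [Finset.card_eq_zero, Finset.filter_eq_empty_iff]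
  intro e _
  induction e with
  | _ u v => exact fun h => Finset.notMem_empty u (h u (by simp))

lemma edgesIn_eq_sum (A : Finset V) :
    edgesIn G A = ∑ C : G.ConnectedComponent, edgesIn G (A ∩ C.supp.toFinset) := by
  unfold edgesIn
  rw [← Finset.card_biUnion]
  · congr 1
    ext e
    induction e with
    | _ u v =>
      simp only [Finset.mem_biUnion, Finset.mem_filter, Sym2.mem_iff, Finset.mem_univ, true_and,
        Finset.mem_inter, forall_eq_or_imp, forall_eq]
      constructor
      · rintro ⟨he, hu, hv⟩
        have hadj : G.Adj u v := by rwa [SimpleGraph.mem_edgeFinset, SimpleGraph.mem_edgeSet] at he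
        refine ⟨G.connectedComponentMk u, he, ⟨hu, ?_⟩, hv, ?_⟩
        · rw [mem_suppF]
        · rw [mem_suppF]
          exact SimpleGraph.ConnectedComponent.sound hadj.symm.reachable
      · rintro ⟨C, he, ⟨hu, _⟩, hv, _⟩
        exact ⟨he, hu, hv⟩
  · intro C _ C' _ hne
    rw [Function.onFun, Finset.disjoint_left]
    intro e he he'
    induction e with
    | _ u v =>
      simp only [Finset.mem_filter, Sym2.mem_iff, Finset.mem_inter, forall_eq_or_imp,
        forall_eq] at he he'
      exact (Finset.disjoint_left.1 (suppF_disjoint G hne)) he.2.1.2 he'.2.1.2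

lemma vol_eq_sum (A : Finset V) :
    vol G A = ∑ C : G.ConnectedComponent, vol G (A ∩ C.supp.toFinset) := by
  unfold vol
  rw [← Finset.sum_biUnion]
  · congr 1
    ext v
    simp only [Finset.mem_biUnion, Finset.mem_univ, true_and, Finset.mem_inter]
    constructor
    · intro hv
      exact ⟨G.connectedComponentMk v, hv, (mem_suppF G).2 rfl⟩
    · rintro ⟨C, hv, _⟩; exact hv
  · intro C _ C' _ hne
    exact (suppF_disjoint G hne).mono Finset.inter_subset_right Finset.inter_subset_right

end Components

/-- Restriction of a partition of `univ` to a subset `s`. -/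
def restrictP (P : Finpartition (univ : Finset V)) (s : Finset V) : Finpartition s :=
  Finpartition.ofErase (P.parts.image (· ∩ s))
    (by
      rw [Finset.supIndep_iff_pairwiseDisjoint]
      rintro B hB B' hB' hne
      simp only [Finset.coe_image, Set.mem_image, Finset.mem_coe] at hB hB'
      obtain ⟨A, hA, rfl⟩ := hB
      obtain ⟨A', hA', rfl⟩ := hB'
      have hAA' : A ≠ A' := fun h => hne (by rw [h])
      exact (P.disjoint hA hA' hAA').mono Finset.inter_subset_left Finset.inter_subset_left)
    (by
      rw [Finset.sup_image]
      have h2 : P.parts.sup id ⊓ s = P.parts.sup fun A => id A ⊓ s :=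
        Finset.sup_inf_distrib_right _ _ _
      have h3 : P.parts.sup (id ∘ fun x => x ∩ s) = P.parts.sup fun A => id A ⊓ s := by
        apply Finset.sup_congr rfl
        intro A _
        simp [Finset.inf_eq_inter]
      rw [h3, ← h2, P.sup_parts]
      simp [Finset.inf_eq_inter])

/-- Summing a function vanishing at `∅` over the restricted partition. -/
lemma sum_restrictP (P : Finpartition (univ : Finset V)) (s : Finset V) (g : Finset V → ℝ)
    (hg : g ∅ = 0) :
    ∑ B ∈ (restrictP P s).parts, g B = ∑ A ∈ P.parts, g (A ∩ s) := by
  have h1 : (restrictP P s).parts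
      = ((P.parts.filter fun A => (A ∩ s).Nonempty).image (· ∩ s)) := by
    show (P.parts.image (· ∩ s)).erase ⊥ = _
    ext B
    simp only [Finset.mem_erase, Finset.mem_image, Finset.mem_filter, Finset.bot_eq_empty]
    constructor
    · rintro ⟨hne, A, hA, rfl⟩
      exact ⟨A, ⟨hA, Finset.nonempty_iff_ne_empty.2 hne⟩, rfl⟩
    · rintro ⟨A, ⟨hA, hne⟩, rfl⟩
      exact ⟨Finset.nonempty_iff_ne_empty.1 hne, A, hA, rfl⟩
  rw [h1, Finset.sum_image ?_, Finset.sum_filter_of_ne ?_]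
  · intro A hA h
    by_contra hcon
    rw [Finset.not_nonempty_iff_eq_empty] at hcon
    rw [hcon, hg] at h
    exact h rfl
  · intro A hA A' hA' h
    simp only [Finset.mem_coe, Finset.mem_filter] at hA hA'
    by_contra hAA'
    obtain ⟨v, hv⟩ := hA.2
    have hv' : v ∈ A' ∩ s := by have h' : A ∩ s = A' ∩ s := h; exact h' ▸ hv
    exact hAA' (P.eq_of_mem_parts hA.1 hA'.1 (Finset.mem_inter.1 hv).1 (Finset.mem_inter.1 hv').1)

/-- Combining partitions of the component supports into a partition of `univ`. -/
def combineP {G : SimpleGraph V}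
    (Ps : ∀ C : G.ConnectedComponent, Finpartition C.supp.toFinset) :
    Finpartition (univ : Finset V) where
  parts := Finset.univ.biUnion fun C => (Ps C).parts
  supIndep := by
    rw [Finset.supIndep_iff_pairwiseDisjoint]
    rintro B hB B' hB' hne
    simp only [Finset.coe_biUnion, Set.mem_iUnion, Finset.mem_coe, Finset.coe_univ,
      Set.mem_univ, true_and, Set.iUnion_true] at hB hB'
    obtain ⟨C, hC⟩ := hB
    obtain ⟨C', hC'⟩ := hB'
    by_cases h : C = C'
    · subst h
      exact (Ps C).disjoint hC hC' hne
    · exact (suppF_disjoint G h).mono ((Ps C).le hC) ((Ps C').le hC')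
  sup_parts := by
    rw [Finset.sup_biUnion]
    ext v
    simp only [Finset.mem_univ, iff_true]
    rw [Finset.mem_sup]
    refine ⟨G.connectedComponentMk v, Finset.mem_univ _, ?_⟩
    rw [Finset.mem_sup]
    obtain ⟨B, hB, hvB⟩ := (Ps (G.connectedComponentMk v)).exists_mem ((mem_suppF G).2 rfl)
    exact ⟨B, hB, hvB⟩
  bot_notMem := by
    simp only [Finset.mem_biUnion, Finset.mem_univ, true_and, not_exists]
    exact fun C => (Ps C).bot_notMem

lemma combineP_parts_disjoint {G : SimpleGraph V}
    (Ps : ∀ C : G.ConnectedComponent, Finpartition C.supp.toFinset)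
    {C C' : G.ConnectedComponent} (h : C ≠ C') :
    Disjoint (Ps C).parts (Ps C').parts := by
  rw [Finset.disjoint_left]
  intro B hB hB'
  obtain ⟨v, hv⟩ := (Ps C).nonempty_of_mem_parts hB
  exact (Finset.disjoint_left.1 (suppF_disjoint G h)) ((Ps C).le hB hv) ((Ps C').le hB' hv)

lemma score_combineP {G : SimpleGraph V}
    (Ps : ∀ C : G.ConnectedComponent, Finpartition C.supp.toFinset) :
    score G (combineP Ps).parts = ∑ C : G.ConnectedComponent, score G (Ps C).parts := by
  unfold score
  have h1 : ∀ g : Finset V → ℝ,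
      ∑ B ∈ (combineP Ps).parts, g B = ∑ C : G.ConnectedComponent, ∑ B ∈ (Ps C).parts, g B := by
    intro g
    exact Finset.sum_biUnion fun C _ C' _ h => combineP_parts_disjoint Ps h
  rw [h1, h1, Finset.sum_sub_distrib, ← Finset.sum_div, ← Finset.sum_div]

/-- The maximum modularity of `G` is the sum over its connected components of
the maximum modularity contribution of each component. -/
theorem maxMod_eq_sum_components (G : SimpleGraph V) (hm : 1 ≤ G.edgeFinset.card) :
    maxMod G = ∑ C : G.ConnectedComponent, qStarOn G C.supp.toFinset := by
  have hm' : (0 : ℝ) < (G.edgeFinset.card : ℝ) := by exact_mod_cast hm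
  apply le_antisymm
  · -- maxMod ≤ ∑ qStarOn
    apply maxMod_le
    intro P
    have key : score G P.parts
        ≤ ∑ C : G.ConnectedComponent, score G (restrictP P C.supp.toFinset).parts := by
      have he : (∑ A ∈ P.parts, (edgesIn G A : ℝ))
          = ∑ C : G.ConnectedComponent,
              ∑ B ∈ (restrictP P C.supp.toFinset).parts, (edgesIn G B : ℝ) := by
        have h5 : ∀ C : G.ConnectedComponent,
            ∑ B ∈ (restrictP P C.supp.toFinset).parts, (edgesIn G B : ℝ)
              = ∑ A ∈ P.parts, (edgesIn G (A ∩ C.supp.toFinset) : ℝ) := by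
          intro C
          apply sum_restrictP
          simp [edgesIn_empty']
        simp_rw [h5]
        rw [Finset.sum_comm]
        refine Finset.sum_congr rfl fun A _ => ?_
        exact_mod_cast congrArg (Nat.cast (R := ℝ)) (edgesIn_eq_sum G A)
      have hv : (∑ C : G.ConnectedComponent,
            ∑ B ∈ (restrictP P C.supp.toFinset).parts, (vol G B : ℝ) ^ 2)
          ≤ ∑ A ∈ P.parts, (vol G A : ℝ) ^ 2 := by
        have h5 : ∀ C : G.ConnectedComponent,
            ∑ B ∈ (restrictP P C.supp.toFinset).parts, (vol G B : ℝ) ^ 2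
              = ∑ A ∈ P.parts, (vol G (A ∩ C.supp.toFinset) : ℝ) ^ 2 := by
          intro C
          apply sum_restrictP
          simp [vol]
        simp_rw [h5]
        rw [Finset.sum_comm]
        apply Finset.sum_le_sum
        intro A _
        calc ∑ C : G.ConnectedComponent, (vol G (A ∩ C.supp.toFinset) : ℝ) ^ 2
            ≤ (∑ C : G.ConnectedComponent, (vol G (A ∩ C.supp.toFinset) : ℝ)) ^ 2 :=
              Finset.sum_sq_le_sq_sum_of_nonneg (fun i _ => by positivity)
          _ = (vol G A : ℝ) ^ 2 := by
              congr 1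
              exact_mod_cast (congrArg (Nat.cast (R := ℝ)) (vol_eq_sum G A)).symm
      unfold score
      rw [Finset.sum_sub_distrib, ← Finset.sum_div, ← Finset.sum_div, he]
      apply sub_le_sub_left
      exact (div_le_div_iff_of_pos_right (by positivity)).2 hv
    calc score G P.parts
        ≤ ∑ C : G.ConnectedComponent, score G (restrictP P C.supp.toFinset).parts := key
      _ ≤ ∑ C : G.ConnectedComponent, qStarOn G C.supp.toFinset :=
          Finset.sum_le_sum fun C _ => le_qStarOn G _ _
  · -- ∑ qStarOn ≤ maxMod
    choose Ps hPs using fun C : G.ConnectedComponent => qStarOn_mem G C.supp.toFinset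
    calc ∑ C : G.ConnectedComponent, qStarOn G C.supp.toFinset
        = ∑ C : G.ConnectedComponent, score G (Ps C).parts := Finset.sum_congr rfl fun C _ => hPs C
      _ = score G (combineP Ps).parts := (score_combineP Ps).symm
      _ ≤ maxMod G := le_maxMod G _


end
end
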